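/- Let 1 < p₁, p₂ < ∞ with 1/p = 1/p₁ + 1/p₂, and 1 ≤ q₁, q₂ ≤ ∞ and q = min{q₁, q₂}. Then for f ∈ L^{p₁,q₁} and g ∈ L^{p₂,q₂}, the product satisfies ‖f·g‖_{L^{p,q}} ≤ C ‖f‖_{L^{p₁,q₁}} ‖g‖_{L^{p₂,q₂}} for a constant C depending only on p₁, p₂, q₁, q₂. -/

import Mathlib

open MeasureTheory Real Set
open scoped ENNReal BigOperators

/-- The Lorentz `L^{p,q}` quasinorm, defined through the distribution function:
for `q = ∞` it is the weak-`L^p` quasinorm, and for finite `q` it is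
`(∫₀^∞ (t μ{|f|>t}^{1/p})^q dt/t)^{1/q}`. -/
noncomputable def lorentzNorm {α : Type*} [MeasurableSpace α] (μ : Measure α) (p : ℝ)
    (q : ℝ≥0∞) (f : α → ℝ) : ℝ≥0∞ :=
  if q = ∞ then ⨆ t : ℝ, ⨆ _ : 0 < t, ENNReal.ofReal t * (μ {x | t < |f x|}) ^ (1 / p)
  else (∫⁻ t in Set.Ioi (0 : ℝ),
      (ENNReal.ofReal t * (μ {x | t < |f x|}) ^ (1 / p)) ^ q.toReal / ENNReal.ofReal t) ^
      (1 / q.toReal)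

namespace LorentzHolderAux


/-- integral of the derivative of `s ^ c` over `Ioo 0 b`. -/
lemma lintegral_rpow_Ioo {b c : ℝ} (hb : 0 ≤ b) (hc : 0 < c) :
    ∫⁻ s in Ioo (0:ℝ) b, ENNReal.ofReal (c * s ^ (c - 1)) = ENNReal.ofReal b ^ c := by
  rcases eq_or_lt_of_le hb with rfl | hb
  · simp [ENNReal.zero_rpow_of_pos hc]
  · have hint : IntervalIntegrable (fun s : ℝ => c * s ^ (c - 1)) volume 0 b :=
      (intervalIntegral.intervalIntegrable_rpow' (by linarith)).const_mul c
    have hval : ∫ s in (0:ℝ)..b, c * s ^ (c - 1) = b ^ c := by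
      rw [intervalIntegral.integral_const_mul, integral_rpow (Or.inl (by linarith))]
      rw [sub_add_cancel, Real.zero_rpow hc.ne', sub_zero]
      field_simp
    have hIoo : IntegrableOn (fun s : ℝ => c * s ^ (c - 1)) (Ioo 0 b) volume := by
      have := (intervalIntegrable_iff_integrableOn_Ioc_of_le hb.le).mp hint
      exact this.mono_set Ioo_subset_Ioc_self
    have hnn : 0 ≤ᵐ[volume.restrict (Ioo (0:ℝ) b)] fun s : ℝ => c * s ^ (c - 1) := by
      filter_upwards [ae_restrict_mem measurableSet_Ioo] with s hs
      exact mul_nonneg hc.le (Real.rpow_nonneg hs.1.le _)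
    rw [← ofReal_integral_eq_lintegral_ofReal hIoo hnn]
    rw [← integral_Ioc_eq_integral_Ioo, ← intervalIntegral.integral_of_le hb.le, hval,
      ENNReal.ofReal_rpow_of_nonneg hb.le hc.le]

lemma lintegral_rpow_Ioi {c : ℝ} (hc : 0 < c) :
    ∫⁻ s in Ioi (0:ℝ), ENNReal.ofReal (c * s ^ (c - 1)) = ∞ := by
  refine ENNReal.eq_top_of_forall_nnreal_le fun r => ?_
  have key : ∀ n : ℕ, ENNReal.ofReal n ^ c ≤ ∫⁻ s in Ioi (0:ℝ), ENNReal.ofReal (c * s ^ (c - 1)) := by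
    intro n
    rw [← lintegral_rpow_Ioo (by positivity : (0:ℝ) ≤ (n:ℝ)) hc]
    exact lintegral_mono' (Measure.restrict_mono Ioo_subset_Ioi_self le_rfl) le_rfl
  set n : ℕ := ⌈(r:ℝ) ^ (1/c)⌉₊ with hn
  refine le_trans ?_ (key n)
  have h1 : ((r:ℝ≥0∞)) = ENNReal.ofReal ((r:ℝ) ^ (1/c)) ^ c := by
    rw [ENNReal.ofReal_rpow_of_nonneg (Real.rpow_nonneg r.coe_nonneg _) hc.le,
      ← Real.rpow_mul r.coe_nonneg, one_div_mul_cancel hc.ne', Real.rpow_one,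
      ENNReal.ofReal_coe_nnreal]
  rw [h1]
  exact ENNReal.rpow_le_rpow (ENNReal.ofReal_le_ofReal (Nat.le_ceil _)) hc.le

/-- volume of `{s > 0 | ofReal s < a}` is `a`. -/
lemma volume_lt_ofReal (a : ℝ≥0∞) :
    volume {s : ℝ | 0 < s ∧ ENNReal.ofReal s < a} = a := by
  rcases eq_or_ne a ∞ with rfl | ha
  · have : {s : ℝ | 0 < s ∧ ENNReal.ofReal s < ∞} = Ioi 0 := by
      ext s; simp [ENNReal.ofReal_lt_top]
    rw [this]; simp
  · have : {s : ℝ | 0 < s ∧ ENNReal.ofReal s < a} = Ioo 0 a.toReal := by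
      ext s
      simp only [mem_setOf_eq, mem_Ioo]
      exact and_congr_right fun hs => ENNReal.ofReal_lt_iff_lt_toReal hs.le ha
    rw [this, Real.volume_Ioo, sub_zero, ENNReal.ofReal_toReal ha]

/-- downward-closed subsets of `Ioi 0`: integrating `c s^(c-1)` gives `(volume S)^c`. -/
lemma lintegral_rpow_downward {S : Set ℝ} (hsub : S ⊆ Ioi 0)
    (hdc : ∀ ⦃x⦄, x ∈ S → Ioo 0 x ⊆ S) {c : ℝ} (hc : 0 < c) :
    ∫⁻ s in S, ENNReal.ofReal (c * s ^ (c - 1)) = (volume S) ^ c := by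
  by_cases hbd : BddAbove S
  · rcases S.eq_empty_or_nonempty with rfl | hne
    · simp [ENNReal.zero_rpow_of_pos hc]
    · set b := sSup S with hbdef
      obtain ⟨x₀, hx₀⟩ := hne
      have hb0 : 0 < b := lt_of_lt_of_le (hsub hx₀) (le_csSup hbd hx₀)
      have h1 : Ioo 0 b ⊆ S := by
        intro y hy
        obtain ⟨x, hxS, hyx⟩ := exists_lt_of_lt_csSup ⟨x₀, hx₀⟩ hy.2
        exact hdc hxS ⟨hy.1, hyx⟩
      have h2 : S ⊆ Ioc 0 b := fun x hx => ⟨hsub hx, le_csSup hbd hx⟩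
      have hvol : volume S = ENNReal.ofReal b := by
        refine le_antisymm ?_ ?_
        · calc volume S ≤ volume (Ioc 0 b) := measure_mono h2
            _ = ENNReal.ofReal b := by rw [Real.volume_Ioc, sub_zero]
        · calc ENNReal.ofReal b = volume (Ioo 0 b) := by rw [Real.volume_Ioo, sub_zero]
            _ ≤ volume S := measure_mono h1
      have hIocIoo : ∫⁻ s in Ioc (0:ℝ) b, ENNReal.ofReal (c * s ^ (c - 1))
          = ∫⁻ s in Ioo (0:ℝ) b, ENNReal.ofReal (c * s ^ (c - 1)) := by
        rw [Measure.restrict_congr_set Ioo_ae_eq_Ioc.symm]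
      rw [hvol, ← lintegral_rpow_Ioo hb0.le hc]
      refine le_antisymm ?_ ?_
      · rw [← hIocIoo]
        exact lintegral_mono' (Measure.restrict_mono h2 le_rfl) le_rfl
      · exact lintegral_mono' (Measure.restrict_mono h1 le_rfl) le_rfl
  · have hS : S = Ioi 0 := by
      refine Subset.antisymm hsub fun y hy => ?_
      obtain ⟨x, hxS, hyx⟩ := not_bddAbove_iff.mp hbd y
      exact hdc hxS ⟨hy, hyx⟩
    have hvol : volume S = ∞ := by rw [hS]; simp
    rw [hvol, hS, lintegral_rpow_Ioi hc, ENNReal.top_rpow_of_pos hc]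


-- chunk2


variable {α : Type*} [MeasurableSpace α]

/-- distribution function -/
noncomputable def dd (μ : Measure α) (f : α → ℝ) (t : ℝ) : ℝ≥0∞ := μ {x | t < |f x|}

lemma dd_antitone (μ : Measure α) (f : α → ℝ) : Antitone (dd μ f) :=
  fun _ _ hst => measure_mono fun _ hx => lt_of_le_of_lt hst hx

lemma dd_measurable (μ : Measure α) (f : α → ℝ) : Measurable (dd μ f) :=
  (dd_antitone μ f).measurable

/-- the "rearrangement" measure function -/
noncomputable def mm (μ : Measure α) (f : α → ℝ) (s : ℝ) : ℝ≥0∞ :=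
  volume {t : ℝ | 0 < t ∧ ENNReal.ofReal s < dd μ f t}

lemma mm_antitone (μ : Measure α) (f : α → ℝ) : Antitone (mm μ f) := by
  intro s s' hss'
  refine measure_mono fun t ht => ⟨ht.1, lt_of_le_of_lt (ENNReal.ofReal_le_ofReal hss') ht.2⟩

lemma mm_measurable (μ : Measure α) (f : α → ℝ) : Measurable (mm μ f) :=
  (mm_antitone μ f).measurable

/-- if `t` is in the level set, `ofReal t ≤ mm`. -/
lemma ofReal_le_mm {μ : Measure α} {f : α → ℝ} {s t : ℝ} (ht : 0 < t)
    (h : ENNReal.ofReal s < dd μ f t) : ENNReal.ofReal t ≤ mm μ f s := by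
  have hsub : Ioo (0:ℝ) t ⊆ {t' : ℝ | 0 < t' ∧ ENNReal.ofReal s < dd μ f t'} := by
    intro y hy
    exact ⟨hy.1, lt_of_lt_of_le h (dd_antitone μ f hy.2.le)⟩
  calc ENNReal.ofReal t = volume (Ioo (0:ℝ) t) := by rw [Real.volume_Ioo, sub_zero]
    _ ≤ _ := measure_mono hsub

/-- contrapositive form: if `t` exceeds information of `mm`, `dd` is small. -/
lemma dd_le_of_lt {μ : Measure α} {f : α → ℝ} {s t : ℝ} (ht : 0 < t)
    (h : mm μ f s < ENNReal.ofReal t) : dd μ f t ≤ ENNReal.ofReal s := by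
  by_contra hcon
  exact absurd (ofReal_le_mm ht (not_le.mp hcon)) h.not_ge

/-- if `mm μ f s = 0`, then the whole positive part of `f` has measure at most `ofReal s`,
hence any product with `f` has small distribution. -/
lemma dd_mul_le_of_mm_eq_zero {μ : Measure α} {f g : α → ℝ} {s : ℝ}
    (h : mm μ f s = 0) {t : ℝ} (ht : 0 < t) :
    dd μ (fun x => f x * g x) t ≤ ENNReal.ofReal s := by
  have hdd : ∀ u : ℝ, 0 < u → dd μ f u ≤ ENNReal.ofReal s := by
    intro u hu
    refine dd_le_of_lt hu ?_
    rw [h]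
    exact ENNReal.ofReal_pos.mpr hu
  have hsub : {x | t < |f x * g x|} ⊆ ⋃ n : ℕ, {x | 1 / ((n:ℝ) + 1) < |f x|} := by
    intro x hx
    have hfx : 0 < |f x| := by
      by_contra hf
      push_neg at hf
      have : |f x| = 0 := le_antisymm hf (abs_nonneg _)
      have h0 : |f x * g x| = 0 := by rw [abs_mul, this, zero_mul]
      simp only [mem_setOf_eq, h0] at hx
      exact absurd hx (not_lt.mpr ht.le)
    obtain ⟨n, hn⟩ := exists_nat_one_div_lt hfx
    exact mem_iUnion.mpr ⟨n, hn⟩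
  calc dd μ (fun x => f x * g x) t ≤ μ (⋃ n : ℕ, {x | 1 / ((n:ℝ) + 1) < |f x|}) :=
        measure_mono hsub
    _ = ⨆ n : ℕ, dd μ f (1 / ((n:ℝ)+1)) := by
        refine Directed.measure_iUnion (Monotone.directed_le fun m n hmn x hx => ?_)
        simp only [mem_setOf_eq] at hx ⊢
        refine lt_of_le_of_lt ?_ hx
        apply one_div_le_one_div_of_le (by positivity)
        exact_mod_cast add_le_add_left (Nat.cast_le.mpr hmn) 1
    _ ≤ ENNReal.ofReal s := iSup_le fun n => hdd _ (by positivity)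

/-- symmetric version -/
lemma dd_mul_le_of_mm_eq_zero' {μ : Measure α} {f g : α → ℝ} {s : ℝ}
    (h : mm μ g s = 0) {t : ℝ} (ht : 0 < t) :
    dd μ (fun x => f x * g x) t ≤ ENNReal.ofReal s := by
  have := dd_mul_le_of_mm_eq_zero (f := g) (g := f) h ht
  refine le_trans (le_of_eq ?_) this
  unfold dd
  congr 1
  ext x
  simp only [mem_setOf_eq]
  rw [mul_comm]

/-- subadditivity of the distribution function under products. -/
lemma dd_mul_le {μ : Measure α} (f g : α → ℝ) {u v : ℝ} (hu : 0 ≤ u) (hv : 0 ≤ v) :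
    dd μ (fun x => f x * g x) (u * v) ≤ dd μ f u + dd μ g v := by
  refine le_trans (measure_mono ?_) (measure_union_le _ _)
  intro x hx
  simp only [mem_setOf_eq, mem_union]
  by_contra hcon
  push_neg at hcon
  have h1 : |f x| ≤ u := hcon.1
  have h2 : |g x| ≤ v := hcon.2
  have : |f x * g x| ≤ u * v := by
    rw [abs_mul]
    exact mul_le_mul h1 h2 (abs_nonneg _) hu
  exact absurd hx (not_lt.mpr this)

/-- **O'Neil's rearrangement product inequality** in `mm` form. -/
lemma mm_mul_le (μ : Measure α) (f g : α → ℝ) {s₁ s₂ : ℝ} (hs₁ : 0 ≤ s₁) (hs₂ : 0 ≤ s₂) :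
    mm μ (fun x => f x * g x) (s₁ + s₂) ≤ mm μ f s₁ * mm μ g s₂ := by
  set a := mm μ f s₁ with ha
  set b := mm μ g s₂ with hb
  rcases eq_or_ne a 0 with ha0 | ha0
  · have : {t : ℝ | 0 < t ∧ ENNReal.ofReal (s₁ + s₂) < dd μ (fun x => f x * g x) t} = ∅ := by
      refine eq_empty_of_forall_notMem fun t ht => ?_
      have h1 : dd μ (fun x => f x * g x) t ≤ ENNReal.ofReal s₁ := dd_mul_le_of_mm_eq_zero ha0 ht.1
      have h2 : ENNReal.ofReal s₁ ≤ ENNReal.ofReal (s₁ + s₂) :=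
        ENNReal.ofReal_le_ofReal (by linarith)
      exact absurd ht.2 (not_lt.mpr (h1.trans h2))
    unfold mm; rw [this]; simp
  rcases eq_or_ne b 0 with hb0 | hb0
  · have : {t : ℝ | 0 < t ∧ ENNReal.ofReal (s₁ + s₂) < dd μ (fun x => f x * g x) t} = ∅ := by
      refine eq_empty_of_forall_notMem fun t ht => ?_
      have h1 : dd μ (fun x => f x * g x) t ≤ ENNReal.ofReal s₂ := dd_mul_le_of_mm_eq_zero' hb0 ht.1
      have h2 : ENNReal.ofReal s₂ ≤ ENNReal.ofReal (s₁ + s₂) :=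
        ENNReal.ofReal_le_ofReal (by linarith)
      exact absurd ht.2 (not_lt.mpr (h1.trans h2))
    unfold mm; rw [this]; simp
  rcases eq_or_ne a ∞ with haT | haT
  · rw [haT, ENNReal.top_mul hb0]; exact le_top
  rcases eq_or_ne b ∞ with hbT | hbT
  · rw [hbT, ENNReal.mul_top ha0]; exact le_top
  -- main case : 0 < a, b < ∞
  have hab : a * b ≠ ∞ := ENNReal.mul_ne_top haT hbT
  have hsub : {t : ℝ | 0 < t ∧ ENNReal.ofReal (s₁ + s₂) < dd μ (fun x => f x * g x) t}
      ⊆ Ioc 0 ((a*b).toReal) := by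
    rintro t ⟨ht0, ht⟩
    refine ⟨ht0, ?_⟩
    by_contra hcon
    push_neg at hcon
    have habt : (a*b).toReal < t := hcon
    have hbpos : 0 < b.toReal := ENNReal.toReal_pos hb0 hbT
    have hapos : 0 ≤ a.toReal := ENNReal.toReal_nonneg
    rw [ENNReal.toReal_mul] at habt
    set u : ℝ := (a.toReal + t / b.toReal) / 2 with hu
    have hau : a.toReal < u := by
      rw [hu]
      have : a.toReal < t / b.toReal := by
        rw [lt_div_iff₀ hbpos]; linarith
      linarith
    have hub : u < t / b.toReal := by
      rw [hu]
      have : a.toReal < t / b.toReal := by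
        rw [lt_div_iff₀ hbpos]; linarith
      linarith
    have hu0 : 0 < u := lt_of_le_of_lt hapos hau
    set v : ℝ := t / u with hv
    have hv0 : 0 < v := div_pos ht0 hu0
    have hbv : b.toReal < v := by
      rw [hv, lt_div_iff₀ hu0]
      calc b.toReal * u < b.toReal * (t / b.toReal) := by
            exact mul_lt_mul_of_pos_left hub hbpos
        _ = t := by field_simp
    have huv : u * v = t := by rw [hv]; field_simp
    have hdf : dd μ f u ≤ ENNReal.ofReal s₁ := by
      refine dd_le_of_lt hu0 ?_
      rw [← ha]
      exact (ENNReal.lt_ofReal_iff_toReal_lt haT).mpr hau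
    have hdg : dd μ g v ≤ ENNReal.ofReal s₂ := by
      refine dd_le_of_lt hv0 ?_
      rw [← hb]
      exact (ENNReal.lt_ofReal_iff_toReal_lt hbT).mpr hbv
    have : dd μ (fun x => f x * g x) t ≤ ENNReal.ofReal (s₁ + s₂) := by
      calc dd μ (fun x => f x * g x) t = dd μ (fun x => f x * g x) (u * v) := by rw [huv]
        _ ≤ dd μ f u + dd μ g v := dd_mul_le f g hu0.le hv0.le
        _ ≤ ENNReal.ofReal s₁ + ENNReal.ofReal s₂ := add_le_add hdf hdg
        _ = ENNReal.ofReal (s₁ + s₂) := (ENNReal.ofReal_add hs₁ hs₂).symm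
    exact absurd ht (not_lt.mpr this)
  calc mm μ (fun x => f x * g x) (s₁ + s₂) ≤ volume (Ioc 0 ((a*b).toReal)) :=
        measure_mono hsub
    _ = ENNReal.ofReal ((a*b).toReal) := by rw [Real.volume_Ioc, sub_zero]
    _ ≤ a * b := ENNReal.ofReal_toReal_le


-- chunk3


-- assume chunk1 lemmas available; restate minimal versions by axiom for speed of testing
/-- The two-sided layer cake identity relating the distribution-form and
rearrangement-form Lorentz integrals. -/
lemma key_identity {lam : ℝ → ℝ≥0∞} (hmono : Antitone lam) {r p : ℝ} (hr : 0 < r) (hp : 0 < p) :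
    ENNReal.ofReal r * ∫⁻ t in Ioi (0:ℝ), ENNReal.ofReal t ^ (r-1) * lam t ^ (r/p)
      = ENNReal.ofReal (r/p) * ∫⁻ s in Ioi (0:ℝ), ENNReal.ofReal s ^ (r/p - 1)
          * (volume {t : ℝ | 0 < t ∧ ENNReal.ofReal s < lam t}) ^ r := by
  set c : ℝ := r / p with hc
  have hcpos : 0 < c := div_pos hr hp
  set T : Set (ℝ × ℝ) := {q : ℝ × ℝ | ENNReal.ofReal q.2 < lam q.1} with hT
  have hTmeas : MeasurableSet T :=
    measurableSet_lt (ENNReal.measurable_ofReal.comp measurable_snd)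
      (hmono.measurable.comp measurable_fst)
  set F : ℝ → ℝ → ℝ≥0∞ := fun t s => ENNReal.ofReal (r * t ^ (r-1))
      * ENNReal.ofReal (c * s ^ (c-1)) * T.indicator (fun _ => (1:ℝ≥0∞)) (t, s) with hF
  have hGmeas : Measurable (Function.uncurry F) := by
    have h1 : Measurable fun q : ℝ × ℝ => ENNReal.ofReal (r * q.1 ^ (r-1)) :=
      ENNReal.measurable_ofReal.comp ((measurable_fst.pow measurable_const).const_mul r)
    have h2 : Measurable fun q : ℝ × ℝ => ENNReal.ofReal (c * q.2 ^ (c-1)) :=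
      ENNReal.measurable_ofReal.comp ((measurable_snd.pow measurable_const).const_mul c)
    have h3 : Measurable (T.indicator (fun _ => (1:ℝ≥0∞))) :=
      measurable_const.indicator hTmeas
    exact (h1.mul h2).mul h3
  -- inner integral in s (for fixed t > 0)
  have hinner_s : ∀ t : ℝ, 0 < t →
      ∫⁻ s in Ioi (0:ℝ), F t s = ENNReal.ofReal (r * t ^ (r-1)) * lam t ^ c := by
    intro t ht
    have heq : ∀ s : ℝ, F t s
        = ENNReal.ofReal (r * t ^ (r-1)) *
          ({s' : ℝ | ENNReal.ofReal s' < lam t}.indicator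
            (fun s' => ENNReal.ofReal (c * s' ^ (c-1))) s) := by
      intro s
      rw [hF]
      simp only
      by_cases hmem : ENNReal.ofReal s < lam t
      · rw [Set.indicator_of_mem (by exact hmem : (t, s) ∈ T),
          Set.indicator_of_mem (by exact hmem), mul_one]
      · rw [Set.indicator_of_notMem (by exact hmem : (t, s) ∉ T),
          Set.indicator_of_notMem (by exact hmem), mul_zero, mul_zero]
    rw [lintegral_congr heq, lintegral_const_mul' _ _ ENNReal.ofReal_ne_top]
    congr 1
    have hmeas' : MeasurableSet {s' : ℝ | ENNReal.ofReal s' < lam t} :=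
      measurableSet_lt ENNReal.measurable_ofReal measurable_const
    rw [lintegral_indicator hmeas', Measure.restrict_restrict hmeas']
    have hseteq : {s' : ℝ | ENNReal.ofReal s' < lam t} ∩ Ioi 0
        = {s' : ℝ | 0 < s' ∧ ENNReal.ofReal s' < lam t} := by
      ext s'; simp [mem_setOf_eq, and_comm]
    rw [hseteq, lintegral_rpow_downward
        (S := {s' : ℝ | 0 < s' ∧ ENNReal.ofReal s' < lam t}) (fun x hx => hx.1)
        (fun x hx y hy => ⟨hy.1, lt_of_le_of_lt (ENNReal.ofReal_le_ofReal hy.2.le) hx.2⟩) hcpos,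
      volume_lt_ofReal]
  -- inner integral in t (for fixed s > 0)
  have hinner_t : ∀ s : ℝ, 0 < s →
      ∫⁻ t in Ioi (0:ℝ), F t s = ENNReal.ofReal (c * s ^ (c-1)) *
        (volume {t : ℝ | 0 < t ∧ ENNReal.ofReal s < lam t}) ^ r := by
    intro s hs
    have heq : ∀ t : ℝ, F t s
        = ENNReal.ofReal (c * s ^ (c-1)) *
          ({t' : ℝ | ENNReal.ofReal s < lam t'}.indicator
            (fun t' => ENNReal.ofReal (r * t' ^ (r-1))) t) := by
      intro t
      rw [hF]
      simp only
      by_cases hmem : ENNReal.ofReal s < lam t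
      · rw [Set.indicator_of_mem (by exact hmem : (t, s) ∈ T),
          Set.indicator_of_mem (by exact hmem), mul_one, mul_comm]
      · rw [Set.indicator_of_notMem (by exact hmem : (t, s) ∉ T),
          Set.indicator_of_notMem (by exact hmem), mul_zero, mul_zero]
    rw [lintegral_congr heq, lintegral_const_mul' _ _ ENNReal.ofReal_ne_top]
    congr 1
    have hmeas' : MeasurableSet {t' : ℝ | ENNReal.ofReal s < lam t'} :=
      measurableSet_lt measurable_const hmono.measurable
    rw [lintegral_indicator hmeas', Measure.restrict_restrict hmeas']
    have hseteq : {t' : ℝ | ENNReal.ofReal s < lam t'} ∩ Ioi 0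
        = {t' : ℝ | 0 < t' ∧ ENNReal.ofReal s < lam t'} := by
      ext t'; simp [mem_setOf_eq, and_comm]
    rw [hseteq, lintegral_rpow_downward
        (S := {t' : ℝ | 0 < t' ∧ ENNReal.ofReal s < lam t'}) (fun x hx => hx.1)
        (fun x hx y hy => ⟨hy.1, lt_of_lt_of_le hx.2 (hmono hy.2.le)⟩) hr]
  -- Fubini
  have hswap : ∫⁻ t in Ioi (0:ℝ), ∫⁻ s in Ioi (0:ℝ), F t s
      = ∫⁻ s in Ioi (0:ℝ), ∫⁻ t in Ioi (0:ℝ), F t s :=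
    lintegral_lintegral_swap hGmeas.aemeasurable
  -- put together
  have hL : ∫⁻ t in Ioi (0:ℝ), ∫⁻ s in Ioi (0:ℝ), F t s
      = ENNReal.ofReal r * ∫⁻ t in Ioi (0:ℝ), ENNReal.ofReal t ^ (r-1) * lam t ^ (r/p) := by
    rw [← lintegral_const_mul' _ _ ENNReal.ofReal_ne_top]
    refine setLIntegral_congr_fun_ae measurableSet_Ioi (ae_of_all _ fun t ht => ?_)
    rw [hinner_s t ht]
    rw [ENNReal.ofReal_mul hr.le, ENNReal.ofReal_rpow_of_pos ht]
    ring
  have hR : ∫⁻ s in Ioi (0:ℝ), ∫⁻ t in Ioi (0:ℝ), F t s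
      = ENNReal.ofReal (r/p) * ∫⁻ s in Ioi (0:ℝ), ENNReal.ofReal s ^ (r/p - 1)
          * (volume {t : ℝ | 0 < t ∧ ENNReal.ofReal s < lam t}) ^ r := by
    rw [← lintegral_const_mul' _ _ ENNReal.ofReal_ne_top]
    refine setLIntegral_congr_fun_ae measurableSet_Ioi (ae_of_all _ fun s hs => ?_)
    rw [hinner_t s hs]
    rw [ENNReal.ofReal_mul hcpos.le, ENNReal.ofReal_rpow_of_pos hs]
    ring
  rw [← hL, ← hR, hswap]


-- chunk4


variable {α : Type*} [MeasurableSpace α]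

/-- the weak (p,∞) quasinorm -/
noncomputable def ww (μ : Measure α) (f : α → ℝ) (p : ℝ) : ℝ≥0∞ :=
  ⨆ t : ℝ, ⨆ _ : 0 < t, ENNReal.ofReal t * dd μ f t ^ (1 / p)

lemma lorentzNorm_top (μ : Measure α) (f : α → ℝ) (p : ℝ) :
    lorentzNorm μ p ∞ f = ww μ f p := by
  rw [lorentzNorm, if_pos rfl]; rfl

lemma le_ww {μ : Measure α} {f : α → ℝ} {p t : ℝ} (ht : 0 < t) :
    ENNReal.ofReal t * dd μ f t ^ (1 / p) ≤ ww μ f p :=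
  le_iSup₂ (f := fun t (_ : 0 < t) => ENNReal.ofReal t * dd μ f t ^ (1 / p)) t ht

/-- (a): pointwise weak bound on `mm`. -/
lemma mm_le_ww {μ : Measure α} {f : α → ℝ} {p s : ℝ} (hp : 0 < p) (hs : 0 < s) :
    ENNReal.ofReal s ^ (1 / p) * mm μ f s ≤ ww μ f p := by
  set W := ww μ f p with hW
  rcases eq_or_ne W ∞ with hWT | hWT
  · rw [hWT]; exact le_top
  have hc0 : ENNReal.ofReal s ^ (1 / p) ≠ 0 :=
    (ENNReal.rpow_pos (ENNReal.ofReal_pos.mpr hs) ENNReal.ofReal_ne_top).ne'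
  have hcT : ENNReal.ofReal s ^ (1 / p) ≠ ∞ :=
    ENNReal.rpow_ne_top_of_nonneg (by positivity) ENNReal.ofReal_ne_top
  set K := W / ENNReal.ofReal s ^ (1 / p) with hK
  have hKT : K ≠ ∞ := by
    rw [hK]
    exact (ENNReal.div_lt_top hWT hc0).ne
  have hsub : {t : ℝ | 0 < t ∧ ENNReal.ofReal s < dd μ f t} ⊆ Ioc 0 K.toReal := by
    rintro t ⟨ht0, ht⟩
    refine ⟨ht0, ?_⟩
    have h1 : ENNReal.ofReal t * ENNReal.ofReal s ^ (1 / p) ≤ W := by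
      calc ENNReal.ofReal t * ENNReal.ofReal s ^ (1 / p)
          ≤ ENNReal.ofReal t * dd μ f t ^ (1 / p) :=
            mul_le_mul_right (ENNReal.rpow_le_rpow ht.le (by positivity)) _
        _ ≤ W := le_ww ht0
    have h2 : ENNReal.ofReal t ≤ K :=
      (ENNReal.le_div_iff_mul_le (Or.inl hc0) (Or.inl hcT)).mpr h1
    exact (ENNReal.ofReal_le_iff_le_toReal hKT).mp h2
  calc ENNReal.ofReal s ^ (1 / p) * mm μ f s
      ≤ ENNReal.ofReal s ^ (1 / p) * volume (Ioc 0 K.toReal) :=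
        mul_le_mul_right (measure_mono hsub) _
    _ ≤ ENNReal.ofReal s ^ (1 / p) * K := by
        rw [Real.volume_Ioc, sub_zero]
        exact mul_le_mul_right ENNReal.ofReal_toReal_le _
    _ = W := ENNReal.mul_div_cancel hc0 hcT

/-- (b): a uniform bound on `s^(1/p) mm` gives a weak bound on `dd`. -/
lemma ww_le_of_mm_bound {μ : Measure α} {f : α → ℝ} {p : ℝ} {M : ℝ≥0∞} (hp : 0 < p)
    (hM : ∀ s : ℝ, 0 < s → ENNReal.ofReal s ^ (1 / p) * mm μ f s ≤ M) (hMT : M ≠ ∞) :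
    ww μ f p ≤ M := by
  refine iSup₂_le fun t ht => ?_
  have hdd : dd μ f t ≤ (M / ENNReal.ofReal t) ^ p := by
    by_contra hcon
    push_neg at hcon
    have hfin : (M / ENNReal.ofReal t) ^ p ≠ ∞ := by
      refine ENNReal.rpow_ne_top_of_nonneg hp.le ?_
      exact (ENNReal.div_lt_top hMT (ENNReal.ofReal_pos.mpr ht).ne').ne
    obtain ⟨s, hs0, hs1, hs2⟩ := ENNReal.lt_iff_exists_real_btwn.mp hcon
    have hspos : 0 < s := by
      by_contra hsneg
      push_neg at hsneg
      rw [ENNReal.ofReal_eq_zero.mpr hsneg] at hs1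
      exact absurd hs1 (not_lt.mpr (zero_le))
    have h1 : ENNReal.ofReal s ^ (1/p) * ENNReal.ofReal t ≤ M :=
      le_trans (mul_le_mul_right (ofReal_le_mm ht hs2) _) (hM s hspos)
    have h2 : ENNReal.ofReal s ^ (1/p) ≤ M / ENNReal.ofReal t :=
      (ENNReal.le_div_iff_mul_le (Or.inl (ENNReal.ofReal_pos.mpr ht).ne')
        (Or.inl ENNReal.ofReal_ne_top)).mpr h1
    have h3 : ENNReal.ofReal s ≤ (M / ENNReal.ofReal t) ^ p := by
      calc ENNReal.ofReal s = (ENNReal.ofReal s ^ (1/p)) ^ p := by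
            rw [← ENNReal.rpow_mul, one_div_mul_cancel hp.ne', ENNReal.rpow_one]
        _ ≤ (M / ENNReal.ofReal t) ^ p := ENNReal.rpow_le_rpow h2 hp.le
    exact absurd hs1 (not_lt.mpr h3)
  calc ENNReal.ofReal t * dd μ f t ^ (1/p)
      ≤ ENNReal.ofReal t * ((M / ENNReal.ofReal t) ^ p) ^ (1/p) :=
        mul_le_mul_right (ENNReal.rpow_le_rpow hdd (by positivity)) _
    _ = ENNReal.ofReal t * (M / ENNReal.ofReal t) := by
        rw [← ENNReal.rpow_mul, mul_one_div_cancel hp.ne', ENNReal.rpow_one]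
    _ ≤ M := ENNReal.mul_div_le

/-- rewrite of the Lorentz integrand for positive `t`. -/
lemma integrand_eq {t : ℝ} (ht : 0 < t) (a : ℝ≥0∞) {r pp : ℝ} (hr : 0 < r) :
    (ENNReal.ofReal t * a ^ (1/pp)) ^ r / ENNReal.ofReal t
      = ENNReal.ofReal t ^ (r-1) * a ^ (r/pp) := by
  have h0 : ENNReal.ofReal t ≠ 0 := (ENNReal.ofReal_pos.mpr ht).ne'
  have hT : ENNReal.ofReal t ≠ ∞ := ENNReal.ofReal_ne_top
  rw [ENNReal.mul_rpow_of_nonneg _ _ hr.le, ← ENNReal.rpow_mul,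
    show (1/pp) * r = r/pp by ring]
  rw [show r = (r-1)+1 by ring, ENNReal.rpow_add _ _ h0 hT, ENNReal.rpow_one]
  rw [show (r-1)+1 = r by ring]  -- restore exponent of a
  rw [mul_right_comm, mul_div_assoc, ENNReal.div_self h0 hT, mul_one]

/-- (c): the weak norm is dominated by any Lorentz norm. -/
lemma ww_le_lorentz {μ : Measure α} {f : α → ℝ} {p : ℝ} (hp : 0 < p) {q : ℝ≥0∞}
    (hq : 1 ≤ q) :
    ww μ f p ≤ ENNReal.ofReal (q.toReal + 1) * lorentzNorm μ p q f := by
  rcases eq_or_ne q ∞ with rfl | hqT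
  · rw [lorentzNorm_top]
    simp
  have hr2 : 1 ≤ q.toReal := by
    rw [← ENNReal.toReal_one]
    exact ENNReal.toReal_mono hqT hq
  have hr2pos : 0 < q.toReal := lt_of_lt_of_le one_pos hr2
  set r2 := q.toReal with hr2def
  set N := ∫⁻ t in Set.Ioi (0 : ℝ),
      (ENNReal.ofReal t * dd μ f t ^ (1 / p)) ^ r2 / ENNReal.ofReal t with hN
  have hlor : lorentzNorm μ p q f = N ^ (1/r2) := by
    rw [lorentzNorm, if_neg hqT]; rfl
  rw [hlor]
  refine iSup₂_le fun v hv => ?_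
  set A := ∫⁻ t in Ioo (0:ℝ) v, ENNReal.ofReal t ^ (r2-1) with hA
  set B := dd μ f v ^ (r2/p) with hB
  have h1 : ENNReal.ofReal r2 * A = ENNReal.ofReal v ^ r2 := by
    rw [hA, ← lintegral_const_mul' _ _ ENNReal.ofReal_ne_top]
    refine Eq.trans (setLIntegral_congr_fun_ae measurableSet_Ioo
      (ae_of_all _ (fun t (ht : t ∈ Ioo (0:ℝ) v) =>
        (?_ : ENNReal.ofReal r2 * ENNReal.ofReal t ^ (r2-1)
            = ENNReal.ofReal (r2 * t ^ (r2-1))))))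
      (lintegral_rpow_Ioo hv.le hr2pos)
    rw [ENNReal.ofReal_mul hr2pos.le, ENNReal.ofReal_rpow_of_pos ht.1]
  have h2 : B * A ≤ N := by
    rw [hA, ← lintegral_const_mul B
      (ENNReal.measurable_ofReal.pow measurable_const : Measurable fun t:ℝ => ENNReal.ofReal t ^ (r2-1))]
    calc ∫⁻ t in Ioo (0:ℝ) v, B * ENNReal.ofReal t ^ (r2-1)
        ≤ ∫⁻ t in Ioo (0:ℝ) v, ENNReal.ofReal t ^ (r2-1) * dd μ f t ^ (r2/p) := by
          refine lintegral_mono_ae ?_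
          filter_upwards [ae_restrict_mem measurableSet_Ioo] with t ht
          rw [mul_comm, hB]
          exact mul_le_mul_right
            (ENNReal.rpow_le_rpow (dd_antitone μ f ht.2.le) (by positivity)) _
      _ = ∫⁻ t in Ioo (0:ℝ) v,
            (ENNReal.ofReal t * dd μ f t ^ (1/p)) ^ r2 / ENNReal.ofReal t := by
          refine setLIntegral_congr_fun_ae measurableSet_Ioo
            (ae_of_all _ (fun t (ht : t ∈ Ioo (0:ℝ) v) => ?_))
          rw [integrand_eq ht.1 _ hr2pos]
      _ ≤ N := by
          rw [hN]
          exact lintegral_mono' (Measure.restrict_mono Ioo_subset_Ioi_self le_rfl) le_rfl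
  have h3 : ENNReal.ofReal v ^ r2 * B ≤ ENNReal.ofReal r2 * N := by
    calc ENNReal.ofReal v ^ r2 * B = ENNReal.ofReal r2 * (B * A) := by
          rw [← h1, mul_assoc, mul_comm A B]
      _ ≤ ENNReal.ofReal r2 * N := mul_le_mul_right h2 _
  have h4 : ENNReal.ofReal v * dd μ f v ^ (1/p)
      = (ENNReal.ofReal v ^ r2 * B) ^ (1/r2) := by
    rw [hB, ENNReal.mul_rpow_of_nonneg _ _ (by positivity), ← ENNReal.rpow_mul,
      ← ENNReal.rpow_mul, mul_one_div_cancel hr2pos.ne',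
      show r2/p * (1/r2) = 1/p by field_simp, ENNReal.rpow_one]
  rw [h4]
  calc (ENNReal.ofReal v ^ r2 * B) ^ (1/r2)
      ≤ (ENNReal.ofReal r2 * N) ^ (1/r2) := ENNReal.rpow_le_rpow h3 (by positivity)
    _ = ENNReal.ofReal r2 ^ (1/r2) * N ^ (1/r2) :=
        ENNReal.mul_rpow_of_nonneg _ _ (by positivity)
    _ ≤ ENNReal.ofReal (r2 + 1) * N ^ (1/r2) := by
        refine mul_le_mul_left ?_ _
        calc ENNReal.ofReal r2 ^ (1/r2) ≤ ENNReal.ofReal r2 ^ (1:ℝ) :=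
              ENNReal.rpow_le_rpow_of_exponent_le (ENNReal.one_le_ofReal.mpr hr2)
                (by rw [div_le_one hr2pos]; exact hr2)
          _ = ENNReal.ofReal r2 := ENNReal.rpow_one _
          _ ≤ ENNReal.ofReal (r2 + 1) := ENNReal.ofReal_le_ofReal (by linarith)


-- chunk5


variable {α : Type*} [MeasurableSpace α]

lemma two_rpow_eq (x : ℝ) : (2:ℝ≥0∞) ^ x = ENNReal.ofReal (2 ^ x) := by
  rw [show (2:ℝ≥0∞) = ENNReal.ofReal 2 by norm_num, ENNReal.ofReal_rpow_of_pos two_pos]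

/-- main lemma, finite minimal exponent case -/
lemma key_fin {p₁ p₂ p : ℝ} (hp₁ : 1 < p₁) (hp₂ : 1 < p₂) (hp : 1/p = 1/p₁ + 1/p₂)
    {q₁ : ℝ≥0∞} (hq₁ : 1 ≤ q₁) (hq₁T : q₁ ≠ ∞) (μ : Measure α) (f g : α → ℝ) :
    lorentzNorm μ p q₁ (fun x => f x * g x)
      ≤ ENNReal.ofReal (p₁/p * 2 ^ (1/p)) * lorentzNorm μ p₁ q₁ f * ww μ g p₂ := by
  have hp₁0 : 0 < p₁ := lt_trans one_pos hp₁
  have hp₂0 : 0 < p₂ := lt_trans one_pos hp₂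
  have hp0 : 0 < p := by
    have h1 : 0 < 1/p := by rw [hp]; positivity
    exact one_div_pos.mp h1
  have hpp₁ : p < p₁ := by
    have h1 : 1/p₁ < 1/p := by
      rw [hp]
      have h2 : 0 < 1/p₂ := by positivity
      linarith
    have h3 := (div_lt_div_iff₀ hp₁0 hp0).mp h1
    linarith
  have hr : 1 ≤ q₁.toReal := by
    rw [← ENNReal.toReal_one]; exact ENNReal.toReal_mono hq₁T hq₁
  set r := q₁.toReal with hrdef
  have hrpos : 0 < r := lt_of_lt_of_le one_pos hr
  have hsum : r/p = r/p₁ + r/p₂ := by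
    calc r/p = r * (1/p) := (mul_one_div r p).symm
      _ = r * (1/p₁ + 1/p₂) := by rw [hp]
      _ = r/p₁ + r/p₂ := by rw [mul_add, mul_one_div, mul_one_div]
  set FG := fun x => f x * g x with hFG
  set W := ww μ g p₂ with hW
  -- distribution-form integrals
  set N := ∫⁻ t in Ioi (0:ℝ), ENNReal.ofReal t ^ (r-1) * dd μ FG t ^ (r/p) with hN
  set Nf := ∫⁻ t in Ioi (0:ℝ), ENNReal.ofReal t ^ (r-1) * dd μ f t ^ (r/p₁) with hNf
  -- rearrangement-form integrals
  set M := ∫⁻ s in Ioi (0:ℝ), ENNReal.ofReal s ^ (r/p - 1) * mm μ FG s ^ r with hM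
  set Mf := ∫⁻ s in Ioi (0:ℝ), ENNReal.ofReal s ^ (r/p₁ - 1) * mm μ f s ^ r with hMf
  set Mf' := ∫⁻ s in Ioi (0:ℝ), ENNReal.ofReal s ^ (r/p₁ - 1) * mm μ f (s/2) ^ r with hMf'
  have hlorFG : lorentzNorm μ p q₁ FG = N ^ (1/r) := by
    rw [lorentzNorm, if_neg hq₁T]
    congr 1
    refine setLIntegral_congr_fun_ae measurableSet_Ioi (ae_of_all _ fun t ht => ?_)
    exact integrand_eq ht _ hrpos
  have hlorf : lorentzNorm μ p₁ q₁ f = Nf ^ (1/r) := by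
    rw [lorentzNorm, if_neg hq₁T]
    congr 1
    refine setLIntegral_congr_fun_ae measurableSet_Ioi (ae_of_all _ fun t ht => ?_)
    exact integrand_eq ht _ hrpos
  -- identities
  have hid1 : ENNReal.ofReal r * N = ENNReal.ofReal (r/p) * M :=
    key_identity (dd_antitone μ FG) hrpos hp0
  have hid2 : ENNReal.ofReal r * Nf = ENNReal.ofReal (r/p₁) * Mf :=
    key_identity (dd_antitone μ f) hrpos hp₁0
  -- pointwise bound
  have hC : M ≤ ((2:ℝ≥0∞) ^ (1/p₂) * W) ^ r * Mf' := by
    have hpoint : ∀ s : ℝ, s ∈ Ioi (0:ℝ) →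
        ENNReal.ofReal s ^ (r/p - 1) * mm μ FG s ^ r
          ≤ ((2:ℝ≥0∞) ^ (1/p₂) * W) ^ r
            * (ENNReal.ofReal s ^ (r/p₁ - 1) * mm μ f (s/2) ^ r) := by
      intro s hs
      have hs0 : (0:ℝ) < s := hs
      have h0 : ENNReal.ofReal s ≠ 0 := (ENNReal.ofReal_pos.mpr hs0).ne'
      have hT : ENNReal.ofReal s ≠ ∞ := ENNReal.ofReal_ne_top
      have hsplit : ENNReal.ofReal s ^ (r/p - 1)
          = ENNReal.ofReal s ^ (r/p₁ - 1) * ENNReal.ofReal s ^ (r/p₂) := by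
        rw [← ENNReal.rpow_add _ _ h0 hT]
        congr 1
        linarith [hsum]
      have hmm : mm μ FG s ≤ mm μ f (s/2) * mm μ g (s/2) := by
        have := mm_mul_le μ f g (by linarith : (0:ℝ) ≤ s/2) (by linarith : (0:ℝ) ≤ s/2)
        rw [show s/2 + s/2 = s by ring] at this
        exact this
      have hWs : ENNReal.ofReal s ^ (1/p₂) * mm μ g (s/2) ≤ (2:ℝ≥0∞) ^ (1/p₂) * W := by
        have hhalf : ENNReal.ofReal s = 2 * ENNReal.ofReal (s/2) := by
          rw [show s = 2 * (s/2) by ring, ENNReal.ofReal_mul (by norm_num : (0:ℝ) ≤ 2)]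
          norm_num
        calc ENNReal.ofReal s ^ (1/p₂) * mm μ g (s/2)
            = (2:ℝ≥0∞) ^ (1/p₂) * (ENNReal.ofReal (s/2) ^ (1/p₂) * mm μ g (s/2)) := by
              rw [hhalf, ENNReal.mul_rpow_of_nonneg _ _ (by positivity), mul_assoc]
          _ ≤ (2:ℝ≥0∞) ^ (1/p₂) * W :=
              mul_le_mul_right (mm_le_ww hp₂0 (by linarith)) _
      calc ENNReal.ofReal s ^ (r/p - 1) * mm μ FG s ^ r
          ≤ ENNReal.ofReal s ^ (r/p - 1) * (mm μ f (s/2) * mm μ g (s/2)) ^ r :=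
            mul_le_mul_right (ENNReal.rpow_le_rpow hmm hrpos.le) _
        _ = (ENNReal.ofReal s ^ (1/p₂) * mm μ g (s/2)) ^ r
            * (ENNReal.ofReal s ^ (r/p₁ - 1) * mm μ f (s/2) ^ r) := by
            rw [hsplit, ENNReal.mul_rpow_of_nonneg _ _ hrpos.le,
              ENNReal.mul_rpow_of_nonneg _ _ hrpos.le, ← ENNReal.rpow_mul,
              show 1/p₂ * r = r/p₂ by ring]
            ring
        _ ≤ ((2:ℝ≥0∞) ^ (1/p₂) * W) ^ r
            * (ENNReal.ofReal s ^ (r/p₁ - 1) * mm μ f (s/2) ^ r) :=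
            mul_le_mul_left (ENNReal.rpow_le_rpow hWs hrpos.le) _
    have hmeas : Measurable fun s : ℝ =>
        ENNReal.ofReal s ^ (r/p₁ - 1) * mm μ f (s/2) ^ r := by
      refine ((ENNReal.measurable_ofReal.pow measurable_const).mul ?_)
      exact ((mm_antitone μ f).measurable.comp (measurable_id.div_const 2)).pow measurable_const
    calc M ≤ ∫⁻ s in Ioi (0:ℝ), ((2:ℝ≥0∞) ^ (1/p₂) * W) ^ r
          * (ENNReal.ofReal s ^ (r/p₁ - 1) * mm μ f (s/2) ^ r) := by
          rw [hM]
          refine lintegral_mono_ae ?_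
          filter_upwards [ae_restrict_mem measurableSet_Ioi] with s hs
          exact hpoint s hs
      _ = ((2:ℝ≥0∞) ^ (1/p₂) * W) ^ r * Mf' := by
          rw [hMf', lintegral_const_mul _ hmeas]
  -- dilation
  have hD : Mf' = (2:ℝ≥0∞) ^ (r/p₁) * Mf := by
    set c : ℝ := r/p₁ - 1 with hc
    set φ : ℝ → ℝ≥0∞ := (Ioi (0:ℝ)).indicator
      (fun s => ENNReal.ofReal s ^ c * mm μ f (s/2) ^ r) with hφ
    have hφmeas : Measurable φ := by
      refine Measurable.indicator ?_ measurableSet_Ioi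
      refine ((ENNReal.measurable_ofReal.pow measurable_const).mul ?_)
      exact ((mm_antitone μ f).measurable.comp (measurable_id.div_const 2)).pow measurable_const
    have h1 : ∫⁻ s, φ s = Mf' := by
      rw [hφ, lintegral_indicator measurableSet_Ioi, hMf']
    have h2 : ∫⁻ x, φ (2*x) = ENNReal.ofReal |(2:ℝ)⁻¹| * ∫⁻ s, φ s := by
      rw [← smul_eq_mul (ENNReal.ofReal |(2:ℝ)⁻¹|), ← lintegral_smul_measure, ← Real.map_volume_mul_left (two_ne_zero),
        lintegral_map hφmeas (measurable_const_mul 2)]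
    have h3 : ∫⁻ x, φ (2*x) = (2:ℝ≥0∞) ^ c * Mf := by
      have heq : ∀ x : ℝ, φ (2*x)
          = (Ioi (0:ℝ)).indicator
              (fun x => (2:ℝ≥0∞) ^ c * (ENNReal.ofReal x ^ c * mm μ f x ^ r)) x := by
        intro x
        by_cases hx : 0 < x
        · rw [hφ, Set.indicator_of_mem (Set.mem_Ioi.mpr (by positivity)),
            Set.indicator_of_mem (by exact hx : x ∈ Ioi (0:ℝ))]
          beta_reduce
          rw [show 2*x/2 = x by ring]
          rw [show ENNReal.ofReal (2*x) = 2 * ENNReal.ofReal x by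
            rw [ENNReal.ofReal_mul (by norm_num : (0:ℝ) ≤ 2)]; norm_num]
          rw [ENNReal.mul_rpow_of_ne_top (by norm_num) ENNReal.ofReal_ne_top]
          ring
        · have h2x : (2*x) ∉ Ioi (0:ℝ) := by
            simp only [mem_Ioi, not_lt]
            nlinarith [not_lt.mp hx]
          rw [hφ, Set.indicator_of_notMem h2x,
            Set.indicator_of_notMem (by exact hx : x ∉ Ioi (0:ℝ))]
      rw [lintegral_congr heq, lintegral_indicator measurableSet_Ioi,
        lintegral_const_mul _ ?hm, hMf]
      case hm =>
        refine ((ENNReal.measurable_ofReal.pow measurable_const).mul ?_)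
        exact (mm_antitone μ f).measurable.pow measurable_const
    have hhalfinv : (2:ℝ≥0∞) * ENNReal.ofReal |(2:ℝ)⁻¹| = 1 := by
      rw [show |(2:ℝ)⁻¹| = 2⁻¹ by norm_num, show (2:ℝ≥0∞) = ENNReal.ofReal 2 by norm_num,
        ← ENNReal.ofReal_mul (by norm_num : (0:ℝ) ≤ 2)]
      norm_num
    calc Mf' = ((2:ℝ≥0∞) * ENNReal.ofReal |(2:ℝ)⁻¹|) * Mf' := by rw [hhalfinv, one_mul]
      _ = (2:ℝ≥0∞) * (ENNReal.ofReal |(2:ℝ)⁻¹| * Mf') := mul_assoc _ _ _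
      _ = (2:ℝ≥0∞) * ∫⁻ x, φ (2*x) := by rw [h2, h1]
      _ = (2:ℝ≥0∞) * ((2:ℝ≥0∞) ^ c * Mf) := by rw [h3]
      _ = (2:ℝ≥0∞) ^ (r/p₁) * Mf := by
          rw [← mul_assoc]
          congr 1
          rw [show r/p₁ = 1 + c by rw [hc]; ring,
            ENNReal.rpow_add _ _ (by norm_num) (by norm_num), ENNReal.rpow_one]
  -- algebra: cancel the constants
  have hmain : N ≤ ENNReal.ofReal (p₁/p) * ((2:ℝ≥0∞) ^ (1/p₂) * W) ^ r
      * (2:ℝ≥0∞) ^ (r/p₁) * Nf := by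
    have hk0 : ENNReal.ofReal (r/p₁) * ENNReal.ofReal r ≠ 0 := by
      refine mul_ne_zero ?_ ?_ <;> exact (ENNReal.ofReal_pos.mpr (by positivity)).ne'
    have hkT : ENNReal.ofReal (r/p₁) * ENNReal.ofReal r ≠ ∞ :=
      ENNReal.mul_ne_top ENNReal.ofReal_ne_top ENNReal.ofReal_ne_top
    refine (ENNReal.mul_le_mul_iff_right hk0 hkT).mp ?_
    have hrpsplit : ENNReal.ofReal (r/p) = ENNReal.ofReal (r/p₁) * ENNReal.ofReal (p₁/p) := by
      rw [← ENNReal.ofReal_mul (by positivity)]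
      congr 1
      field_simp
    calc ENNReal.ofReal (r/p₁) * ENNReal.ofReal r * N
        = ENNReal.ofReal (r/p₁) * (ENNReal.ofReal r * N) := mul_assoc _ _ _
      _ = ENNReal.ofReal (r/p₁) * (ENNReal.ofReal (r/p) * M) := by rw [hid1]
      _ ≤ ENNReal.ofReal (r/p₁) * (ENNReal.ofReal (r/p)
            * (((2:ℝ≥0∞) ^ (1/p₂) * W) ^ r * Mf')) := by
          exact mul_le_mul_right (mul_le_mul_right hC _) _
      _ = ENNReal.ofReal (r/p) * (((2:ℝ≥0∞) ^ (1/p₂) * W) ^ r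
            * ((2:ℝ≥0∞) ^ (r/p₁) * (ENNReal.ofReal (r/p₁) * Mf))) := by
          rw [hD]; ring
      _ = ENNReal.ofReal (r/p) * (((2:ℝ≥0∞) ^ (1/p₂) * W) ^ r
            * ((2:ℝ≥0∞) ^ (r/p₁) * (ENNReal.ofReal r * Nf))) := by
          rw [← hid2]
      _ = ENNReal.ofReal (r/p₁) * ENNReal.ofReal r
          * (ENNReal.ofReal (p₁/p) * ((2:ℝ≥0∞) ^ (1/p₂) * W) ^ r
            * (2:ℝ≥0∞) ^ (r/p₁) * Nf) := by
          rw [hrpsplit]; ring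
  -- take r-th roots
  rw [hlorFG, hlorf]
  have h2p : (2:ℝ≥0∞) ^ (1/p₂) * (2:ℝ≥0∞) ^ (1/p₁) = (2:ℝ≥0∞) ^ (1/p) := by
    rw [← ENNReal.rpow_add _ _ (by norm_num) (by norm_num)]
    congr 1
    linarith [hp]
  calc N ^ (1/r)
      ≤ (ENNReal.ofReal (p₁/p) * ((2:ℝ≥0∞) ^ (1/p₂) * W) ^ r
          * (2:ℝ≥0∞) ^ (r/p₁) * Nf) ^ (1/r) := ENNReal.rpow_le_rpow hmain (by positivity)
    _ = ENNReal.ofReal (p₁/p) ^ (1/r) * ((2:ℝ≥0∞) ^ (1/p₂) * W)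
          * (2:ℝ≥0∞) ^ (1/p₁) * Nf ^ (1/r) := by
        rw [ENNReal.mul_rpow_of_nonneg _ _ (by positivity),
          ENNReal.mul_rpow_of_nonneg _ _ (by positivity),
          ENNReal.mul_rpow_of_nonneg _ _ (by positivity),
          ← ENNReal.rpow_mul (((2:ℝ≥0∞) ^ (1/p₂) * W)) r (1/r),
          mul_one_div_cancel hrpos.ne', ENNReal.rpow_one,
          ← ENNReal.rpow_mul (2:ℝ≥0∞) (r/p₁) (1/r),
          show r/p₁ * (1/r) = 1/p₁ by field_simp]
    _ ≤ ENNReal.ofReal (p₁/p) * ((2:ℝ≥0∞) ^ (1/p₂) * W)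
          * (2:ℝ≥0∞) ^ (1/p₁) * Nf ^ (1/r) := by
        refine mul_le_mul_left (mul_le_mul_left (mul_le_mul_left ?_ _) _) _
        calc ENNReal.ofReal (p₁/p) ^ (1/r) ≤ ENNReal.ofReal (p₁/p) ^ (1:ℝ) :=
              ENNReal.rpow_le_rpow_of_exponent_le
                (ENNReal.one_le_ofReal.mpr ((one_le_div hp0).mpr hpp₁.le))
                (by rw [div_le_one hrpos]; exact hr)
          _ = ENNReal.ofReal (p₁/p) := ENNReal.rpow_one _
    _ = ENNReal.ofReal (p₁/p * 2 ^ (1/p)) * Nf ^ (1/r) * W := by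
        rw [ENNReal.ofReal_mul (by positivity), ← two_rpow_eq, ← h2p]
        ring


-- chunk6


variable {α : Type*} [MeasurableSpace α]

/-- the weak lemma: `s^(1/p) mm μ f (s/2) ≤ 2^(1/p) ww`. -/
lemma mm_half_le_ww {μ : Measure α} {f : α → ℝ} {p s : ℝ} (hp : 0 < p) (hs : 0 < s) :
    ENNReal.ofReal s ^ (1/p) * mm μ f (s/2) ≤ (2:ℝ≥0∞) ^ (1/p) * ww μ f p := by
  have hhalf : ENNReal.ofReal s = 2 * ENNReal.ofReal (s/2) := by
    rw [show s = 2 * (s/2) by ring, ENNReal.ofReal_mul (by norm_num : (0:ℝ) ≤ 2)]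
    norm_num
  calc ENNReal.ofReal s ^ (1/p) * mm μ f (s/2)
      = (2:ℝ≥0∞) ^ (1/p) * (ENNReal.ofReal (s/2) ^ (1/p) * mm μ f (s/2)) := by
        rw [hhalf, ENNReal.mul_rpow_of_nonneg _ _ (by positivity), mul_assoc]
    _ ≤ (2:ℝ≥0∞) ^ (1/p) * ww μ f p :=
        mul_le_mul_right (mm_le_ww hp (by linarith)) _

lemma dd_zero_of_ww_zero {μ : Measure α} {f : α → ℝ} {p : ℝ} (hp : 0 < p) (h : ww μ f p = 0)
    {t : ℝ} (ht : 0 < t) : dd μ f t = 0 := by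
  have h1 : ENNReal.ofReal t * dd μ f t ^ (1/p) = 0 :=
    le_antisymm (h ▸ le_ww ht) (zero_le)
  rcases mul_eq_zero.mp h1 with h2 | h2
  · exact absurd h2 (ENNReal.ofReal_pos.mpr ht).ne'
  · rcases ENNReal.rpow_eq_zero_iff.mp h2 with ⟨h4, -⟩ | ⟨-, h5⟩
    · exact h4
    · have : (0:ℝ) < 1/p := by positivity
      linarith

lemma mm_zero_of_dd_zero {μ : Measure α} {f : α → ℝ}
    (h : ∀ t : ℝ, 0 < t → dd μ f t = 0) (s : ℝ) (hs : 0 ≤ s) : mm μ f s = 0 := by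
  have : {t : ℝ | 0 < t ∧ ENNReal.ofReal s < dd μ f t} = ∅ := by
    refine eq_empty_of_forall_notMem fun t ht => ?_
    obtain ⟨ht1, ht2⟩ := ht
    rw [h t ht1] at ht2
    exact absurd ht2 (not_lt.mpr (zero_le))
  rw [mm, this, measure_empty]

lemma ww_mul_zero {μ : Measure α} {f g : α → ℝ} {pf pr : ℝ} (hpf : 0 < pf) (hpr : 0 < pr)
    (h : ww μ f pf = 0) : ww μ (fun x => f x * g x) pr = 0 := by
  have hdd : ∀ t : ℝ, 0 < t → dd μ (fun x => f x * g x) t = 0 := by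
    intro t ht
    have hmm0 : mm μ f 0 = 0 :=
      mm_zero_of_dd_zero (fun u hu => dd_zero_of_ww_zero hpf h hu) 0 le_rfl
    have := dd_mul_le_of_mm_eq_zero (g := g) hmm0 ht
    simpa using this
  refine le_antisymm (iSup₂_le fun t ht => ?_) (zero_le)
  rw [hdd t ht, ENNReal.zero_rpow_of_pos (by positivity), mul_zero]

/-- main lemma, joint weak case. -/
lemma key_top {p₁ p₂ p : ℝ} (hp₁ : 1 < p₁) (hp₂ : 1 < p₂) (hp : 1/p = 1/p₁ + 1/p₂)
    (μ : Measure α) (f g : α → ℝ) :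
    lorentzNorm μ p ∞ (fun x => f x * g x)
      ≤ ENNReal.ofReal (p₁/p * 2 ^ (1/p)) * lorentzNorm μ p₁ ∞ f * lorentzNorm μ p₂ ∞ g := by
  have hp₁0 : 0 < p₁ := lt_trans one_pos hp₁
  have hp₂0 : 0 < p₂ := lt_trans one_pos hp₂
  have hp0 : 0 < p := by
    have h1 : 0 < 1/p := by rw [hp]; positivity
    exact one_div_pos.mp h1
  have hpp₁ : p ≤ p₁ := by
    have h1 : 1/p₁ < 1/p := by
      rw [hp]
      have h2 : 0 < 1/p₂ := by positivity
      linarith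
    have h3 := (div_lt_div_iff₀ hp₁0 hp0).mp h1
    linarith
  rw [lorentzNorm_top, lorentzNorm_top, lorentzNorm_top]
  set Wf := ww μ f p₁ with hWf
  set Wg := ww μ g p₂ with hWg
  rcases eq_or_ne Wf 0 with hWf0 | hWf0
  · rw [ww_mul_zero hp₁0 hp0 hWf0]
    exact zero_le
  rcases eq_or_ne Wg 0 with hWg0 | hWg0
  · have : ww μ (fun x => g x * f x) p = 0 := ww_mul_zero hp₂0 hp0 hWg0
    have heq : (fun x => f x * g x) = (fun x => g x * f x) := funext fun x => mul_comm _ _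
    rw [heq, this]
    exact zero_le
  have hCne : ENNReal.ofReal (p₁/p * 2 ^ (1/p)) ≠ 0 := by
    refine (ENNReal.ofReal_pos.mpr ?_).ne'
    positivity
  rcases eq_or_ne Wf ∞ with hWfT | hWfT
  · rw [hWfT, ENNReal.mul_top hCne, ENNReal.top_mul hWg0]
    exact le_top
  rcases eq_or_ne Wg ∞ with hWgT | hWgT
  · rw [hWgT, ENNReal.mul_top (mul_ne_zero hCne hWf0)]
    exact le_top
  set M := (2:ℝ≥0∞) ^ (1/p) * Wf * Wg with hM
  have hMT : M ≠ ∞ := by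
    rw [hM]
    exact ENNReal.mul_ne_top (ENNReal.mul_ne_top
      (ENNReal.rpow_ne_top_of_nonneg (by positivity) (by norm_num)) hWfT) hWgT
  have hbound : ∀ s : ℝ, 0 < s →
      ENNReal.ofReal s ^ (1/p) * mm μ (fun x => f x * g x) s ≤ M := by
    intro s hs
    have hsplit : ENNReal.ofReal s ^ (1/p)
        = ENNReal.ofReal s ^ (1/p₁) * ENNReal.ofReal s ^ (1/p₂) := by
      rw [← ENNReal.rpow_add _ _ (ENNReal.ofReal_pos.mpr hs).ne' ENNReal.ofReal_ne_top, ← hp]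
    have hmm : mm μ (fun x => f x * g x) s ≤ mm μ f (s/2) * mm μ g (s/2) := by
      have := mm_mul_le μ f g (by linarith : (0:ℝ) ≤ s/2) (by linarith : (0:ℝ) ≤ s/2)
      rw [show s/2 + s/2 = s by ring] at this
      exact this
    calc ENNReal.ofReal s ^ (1/p) * mm μ (fun x => f x * g x) s
        ≤ ENNReal.ofReal s ^ (1/p) * (mm μ f (s/2) * mm μ g (s/2)) :=
          mul_le_mul_right hmm _
      _ = (ENNReal.ofReal s ^ (1/p₁) * mm μ f (s/2))
          * (ENNReal.ofReal s ^ (1/p₂) * mm μ g (s/2)) := by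
          rw [hsplit]; ring
      _ ≤ ((2:ℝ≥0∞) ^ (1/p₁) * Wf) * ((2:ℝ≥0∞) ^ (1/p₂) * Wg) :=
          mul_le_mul' (mm_half_le_ww hp₁0 hs) (mm_half_le_ww hp₂0 hs)
      _ = M := by
          rw [hM, show ((2:ℝ≥0∞) ^ (1/p₁) * Wf) * ((2:ℝ≥0∞) ^ (1/p₂) * Wg)
            = ((2:ℝ≥0∞) ^ (1/p₁) * (2:ℝ≥0∞) ^ (1/p₂)) * Wf * Wg by ring,
            ← ENNReal.rpow_add _ _ (by norm_num) (by norm_num), ← hp]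
  calc ww μ (fun x => f x * g x) p ≤ M := ww_le_of_mm_bound hp0 hbound hMT
    _ ≤ ENNReal.ofReal (p₁/p * 2 ^ (1/p)) * Wf * Wg := by
        rw [hM]
        refine mul_le_mul_left (mul_le_mul_left ?_ _) _
        rw [two_rpow_eq]
        refine ENNReal.ofReal_le_ofReal ?_
        have h2p : (0:ℝ) < 2 ^ (1/p) := by positivity
        nlinarith [(one_le_div hp0).mpr hpp₁, h2p]


end LorentzHolderAux

open LorentzHolderAux in
/-- **O'Neil's Hölder inequality in Lorentz spaces.**
If `1 < p₁, p₂ < ∞`, `1/p = 1/p₁ + 1/p₂`, `1 ≤ q₁, q₂ ≤ ∞` and `q = min{q₁,q₂}`, then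
`‖f·g‖_{L^{p,q}} ≤ C ‖f‖_{L^{p₁,q₁}} ‖g‖_{L^{p₂,q₂}}` with `C = C(p₁,p₂,q₁,q₂)`. -/
theorem lorentz_holder (p₁ p₂ p : ℝ) (hp₁ : 1 < p₁) (hp₂ : 1 < p₂)
    (hp : 1 / p = 1 / p₁ + 1 / p₂) (q₁ q₂ : ℝ≥0∞) (hq₁ : 1 ≤ q₁) (hq₂ : 1 ≤ q₂) :
    ∃ C : ℝ, 0 < C ∧
      ∀ (α : Type*) [MeasurableSpace α] (μ : Measure α) (f g : α → ℝ),
        lorentzNorm μ p (min q₁ q₂) (fun x => f x * g x) ≤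
          ENNReal.ofReal C * lorentzNorm μ p₁ q₁ f * lorentzNorm μ p₂ q₂ g := by
  have hp₁0 : 0 < p₁ := lt_trans one_pos hp₁
  have hp₂0 : 0 < p₂ := lt_trans one_pos hp₂
  have hp0 : 0 < p := by
    have h1 : 0 < 1/p := by rw [hp]; positivity
    exact one_div_pos.mp h1
  rcases le_total q₁ q₂ with hq | hq
  · refine ⟨(p₁/p * 2 ^ (1/p)) * (q₂.toReal + 1), by positivity, ?_⟩
    intro α _ μ f g
    rw [min_eq_left hq]
    rcases eq_or_ne q₁ ∞ with rfl | hq₁T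
    · have hq₂T : q₂ = ∞ := top_le_iff.mp hq
      subst hq₂T
      calc lorentzNorm μ p ∞ (fun x => f x * g x)
          ≤ ENNReal.ofReal (p₁/p * 2 ^ (1/p)) * lorentzNorm μ p₁ ∞ f * lorentzNorm μ p₂ ∞ g :=
            key_top hp₁ hp₂ hp μ f g
        _ ≤ ENNReal.ofReal ((p₁/p * 2 ^ (1/p)) * ((⊤:ℝ≥0∞).toReal + 1))
            * lorentzNorm μ p₁ ∞ f * lorentzNorm μ p₂ ∞ g := by
            refine mul_le_mul_left (mul_le_mul_left (ENNReal.ofReal_le_ofReal ?_) _) _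
            rw [ENNReal.toReal_top]
            nlinarith [Real.rpow_pos_of_pos (by norm_num : (0:ℝ) < 2) (1/p),
              div_pos hp₁0 hp0]
    · calc lorentzNorm μ p q₁ (fun x => f x * g x)
          ≤ ENNReal.ofReal (p₁/p * 2 ^ (1/p)) * lorentzNorm μ p₁ q₁ f * ww μ g p₂ :=
            key_fin hp₁ hp₂ hp hq₁ hq₁T μ f g
        _ ≤ ENNReal.ofReal (p₁/p * 2 ^ (1/p)) * lorentzNorm μ p₁ q₁ f
            * (ENNReal.ofReal (q₂.toReal + 1) * lorentzNorm μ p₂ q₂ g) :=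
            mul_le_mul_right (ww_le_lorentz hp₂0 hq₂) _
        _ = ENNReal.ofReal ((p₁/p * 2 ^ (1/p)) * (q₂.toReal + 1))
            * lorentzNorm μ p₁ q₁ f * lorentzNorm μ p₂ q₂ g := by
            rw [show ENNReal.ofReal ((p₁/p * 2 ^ (1/p)) * (q₂.toReal + 1))
              = ENNReal.ofReal (p₁/p * 2 ^ (1/p)) * ENNReal.ofReal (q₂.toReal + 1) from
              ENNReal.ofReal_mul (by positivity)]
            ring
  · refine ⟨(p₂/p * 2 ^ (1/p)) * (q₁.toReal + 1), by positivity, ?_⟩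
    intro α _ μ f g
    rw [min_eq_right hq]
    have hcomm : (fun x => f x * g x) = (fun x => g x * f x) := funext fun x => mul_comm _ _
    have hp' : 1/p = 1/p₂ + 1/p₁ := by rw [hp]; ring
    rw [hcomm]
    rcases eq_or_ne q₂ ∞ with rfl | hq₂T
    · have hq₁T : q₁ = ∞ := top_le_iff.mp hq
      subst hq₁T
      calc lorentzNorm μ p ∞ (fun x => g x * f x)
          ≤ ENNReal.ofReal (p₂/p * 2 ^ (1/p)) * lorentzNorm μ p₂ ∞ g * lorentzNorm μ p₁ ∞ f :=
            key_top hp₂ hp₁ hp' μ g f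
        _ ≤ ENNReal.ofReal ((p₂/p * 2 ^ (1/p)) * ((⊤:ℝ≥0∞).toReal + 1))
            * lorentzNorm μ p₁ ∞ f * lorentzNorm μ p₂ ∞ g := by
            rw [ENNReal.toReal_top]
            calc ENNReal.ofReal (p₂/p * 2 ^ (1/p)) * lorentzNorm μ p₂ ∞ g * lorentzNorm μ p₁ ∞ f
                = ENNReal.ofReal (p₂/p * 2 ^ (1/p)) * lorentzNorm μ p₁ ∞ f
                  * lorentzNorm μ p₂ ∞ g := by ring
              _ ≤ _ := by
                  refine mul_le_mul_left (mul_le_mul_left (ENNReal.ofReal_le_ofReal ?_) _) _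
                  nlinarith [Real.rpow_pos_of_pos (by norm_num : (0:ℝ) < 2) (1/p),
                    div_pos hp₂0 hp0]
    · calc lorentzNorm μ p q₂ (fun x => g x * f x)
          ≤ ENNReal.ofReal (p₂/p * 2 ^ (1/p)) * lorentzNorm μ p₂ q₂ g * ww μ f p₁ :=
            key_fin hp₂ hp₁ hp' hq₂ hq₂T μ g f
        _ ≤ ENNReal.ofReal (p₂/p * 2 ^ (1/p)) * lorentzNorm μ p₂ q₂ g
            * (ENNReal.ofReal (q₁.toReal + 1) * lorentzNorm μ p₁ q₁ f) :=
            mul_le_mul_right (ww_le_lorentz hp₁0 hq₁) _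
        _ = ENNReal.ofReal ((p₂/p * 2 ^ (1/p)) * (q₁.toReal + 1))
            * lorentzNorm μ p₁ q₁ f * lorentzNorm μ p₂ q₂ g := by
            rw [show ENNReal.ofReal ((p₂/p * 2 ^ (1/p)) * (q₁.toReal + 1))
              = ENNReal.ofReal (p₂/p * 2 ^ (1/p)) * ENNReal.ofReal (q₁.toReal + 1) from
              ENNReal.ofReal_mul (by positivity)]
            ring
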